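/- arXiv:2512.05677 — 2 statements merged into one kernel-verified Lean document; each statement's English description precedes it below -/
import Mathlib

section
/- Let N ≥ 1 be a natural number and let μ be an exchangeable probability measure on Fin N → ℝ, i.e., for every permutation σ of Fin N the pushforward of μ under the map z ↦ z ∘ σ equals μ. Let T : (Fin N → ℝ) → ℝ be measurable and define the permutation p-value p(z) := (1/N!) · |{σ a permutation of Fin N : T(z ∘ σ) ≤ T(z)}|. Then for every α ∈ [0,1], μ({z : p(z) ≤ α}) ≤ α. -/
open MeasureTheory
open scoped ENNReal

/-- Permutation p-value of a statistic `T` at data vector `z`. -/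
noncomputable def permPValue (N : ℕ) (T : (Fin N → ℝ) → ℝ) (z : Fin N → ℝ) : ℝ :=
  ((Finset.univ.filter (fun σ : Equiv.Perm (Fin N) => T (z ∘ σ) ≤ T z)).card : ℝ) /
    (Nat.factorial N : ℝ)

open Finset in
lemma rank_card_le {S : Type*} [Fintype S] (f : S → ℝ) (k : ℕ) :
    (univ.filter (fun s => (univ.filter (fun t => f t ≤ f s)).card ≤ k)).card ≤ k := by
  classical
  set A := univ.filter (fun s => (univ.filter (fun t => f t ≤ f s)).card ≤ k) with hA
  rcases A.eq_empty_or_nonempty with h | h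
  · simp [h]
  · obtain ⟨s, hs, hmax⟩ := A.exists_max_image f h
    calc A.card ≤ (univ.filter fun t => f t ≤ f s).card := by
          apply Finset.card_le_card
          intro t ht
          simp only [Finset.mem_filter, Finset.mem_univ, true_and]
          exact hmax t ht
      _ ≤ k := (Finset.mem_filter.mp hs).2

lemma permPValue_comp (N : ℕ) (T : (Fin N → ℝ) → ℝ) (z : Fin N → ℝ) (σ : Equiv.Perm (Fin N)) :
    permPValue N T (z ∘ σ) =
      ((Finset.univ.filter (fun π : Equiv.Perm (Fin N) => T (z ∘ π) ≤ T (z ∘ σ))).card : ℝ) /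
        (Nat.factorial N : ℝ) := by
  unfold permPValue
  congr 2
  apply Finset.card_bij' (fun τ _ => σ * τ) (fun π _ => σ⁻¹ * π)
  · intro τ hτ
    simp only [Finset.mem_filter, Finset.mem_univ, true_and] at hτ ⊢
    simpa [Equiv.Perm.coe_mul, Function.comp_assoc] using hτ
  · intro π hπ
    simp only [Finset.mem_filter, Finset.mem_univ, true_and] at hπ ⊢
    simpa [Equiv.Perm.coe_mul, Function.comp_assoc,
      show (⇑σ ∘ ⇑σ.symm ∘ ⇑π : Fin N → Fin N) = ⇑π from by ext x; simp] using hπ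
  · intro τ _; group
  · intro π _; group

/-- Under an exchangeable null distribution, the permutation p-value is a valid p-value. -/
theorem permutation_test_valid_exchangeable
    (N : ℕ) (hN : 1 ≤ N)
    (μ : Measure (Fin N → ℝ)) [IsProbabilityMeasure μ]
    (hexch : ∀ σ : Equiv.Perm (Fin N),
      Measure.map (fun z : Fin N → ℝ => z ∘ σ) μ = μ)
    (T : (Fin N → ℝ) → ℝ) (hT : Measurable T)
    (α : ℝ) (hα : α ∈ Set.Icc (0 : ℝ) 1) :
    μ {z | permPValue N T z ≤ α} ≤ ENNReal.ofReal α := by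
  classical
  obtain ⟨hα0, hα1⟩ := hα
  have hfacpos : (0:ℝ) < (Nat.factorial N : ℝ) := by positivity
  set k := ⌊α * (Nat.factorial N : ℝ)⌋₊ with hk
  set E := {z | permPValue N T z ≤ α} with hEdef
  have hmeas_comp : ∀ σ : Equiv.Perm (Fin N), Measurable (fun z : Fin N → ℝ => z ∘ σ) :=
    fun σ => measurable_pi_lambda _ (fun i => measurable_pi_apply _)
  -- measurability of permPValue
  have hp_meas : Measurable (permPValue N T) := by
    have h1 : Measurable (fun z : Fin N → ℝ =>
        ((Finset.univ.filter (fun σ : Equiv.Perm (Fin N) => T (z ∘ σ) ≤ T z)).card : ℝ)) := by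
      have : (fun z : Fin N → ℝ =>
          ((Finset.univ.filter (fun σ : Equiv.Perm (Fin N) => T (z ∘ σ) ≤ T z)).card : ℝ)) =
          fun z => ∑ σ : Equiv.Perm (Fin N), if T (z ∘ σ) ≤ T z then (1:ℝ) else 0 := by
        funext z
        rw [Finset.card_filter]
        push_cast
        rfl
      rw [this]
      apply Finset.measurable_sum
      intro σ _
      exact Measurable.ite (measurableSet_le (hT.comp (hmeas_comp σ)) hT)
        measurable_const measurable_const
    exact h1.div_const _
  have hE : MeasurableSet E := measurableSet_le hp_meas measurable_const
  -- pointwise combinatorial bound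
  have hpoint : ∀ z : Fin N → ℝ,
      (Finset.univ.filter (fun σ : Equiv.Perm (Fin N) => (z ∘ σ) ∈ E)).card ≤ k := by
    intro z
    have hiff : ∀ σ : Equiv.Perm (Fin N), ((z ∘ σ) ∈ E) ↔
        (Finset.univ.filter (fun π : Equiv.Perm (Fin N) =>
          T (z ∘ π) ≤ T (z ∘ σ))).card ≤ k := by
      intro σ
      rw [hEdef, Set.mem_setOf_eq, permPValue_comp, div_le_iff₀ hfacpos, hk]
      rw [Nat.le_floor_iff (by positivity)]
    calc (Finset.univ.filter (fun σ : Equiv.Perm (Fin N) => (z ∘ σ) ∈ E)).card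
        = (Finset.univ.filter (fun σ : Equiv.Perm (Fin N) =>
            (Finset.univ.filter (fun π : Equiv.Perm (Fin N) =>
              T (z ∘ π) ≤ T (z ∘ σ))).card ≤ k)).card := by
          congr 1; apply Finset.filter_congr; intro σ _; simp [hiff σ]
      _ ≤ k := rank_card_le (fun σ : Equiv.Perm (Fin N) => T (z ∘ σ)) k
  -- sum over permutations
  have hsum : (Nat.factorial N : ℝ≥0∞) * μ E
      = ∑ σ : Equiv.Perm (Fin N), μ ((fun z : Fin N → ℝ => z ∘ σ) ⁻¹' E) := by
    have hμeq : ∀ σ : Equiv.Perm (Fin N), μ ((fun z : Fin N → ℝ => z ∘ σ) ⁻¹' E) = μ E := by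
      intro σ
      rw [← Measure.map_apply (hmeas_comp σ) hE, hexch σ]
    rw [Finset.sum_congr rfl (fun σ _ => hμeq σ), Finset.sum_const, Finset.card_univ]
    simp [Fintype.card_perm, nsmul_eq_mul]
  have hbound : ∑ σ : Equiv.Perm (Fin N), μ ((fun z : Fin N → ℝ => z ∘ σ) ⁻¹' E)
      ≤ (k : ℝ≥0∞) := by
    have h1 : ∀ σ : Equiv.Perm (Fin N), μ ((fun z : Fin N → ℝ => z ∘ σ) ⁻¹' E)
        = ∫⁻ z, Set.indicator ((fun z : Fin N → ℝ => z ∘ σ) ⁻¹' E) (fun _ => 1) z ∂μ := by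
      intro σ
      rw [lintegral_indicator ((hE.preimage (hmeas_comp σ))), lintegral_one,
        Measure.restrict_apply_univ]
    calc ∑ σ : Equiv.Perm (Fin N), μ ((fun z : Fin N → ℝ => z ∘ σ) ⁻¹' E)
        = ∫⁻ z, ∑ σ : Equiv.Perm (Fin N),
            Set.indicator ((fun z : Fin N → ℝ => z ∘ σ) ⁻¹' E) (fun _ => 1) z ∂μ := by
          rw [Finset.sum_congr rfl (fun σ _ => h1 σ)]
          rw [← lintegral_finset_sum]
          intro σ _
          exact (measurable_one.indicator (hE.preimage (hmeas_comp σ)))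
      _ ≤ ∫⁻ _, (k : ℝ≥0∞) ∂μ := by
          apply lintegral_mono
          intro z
          calc ∑ σ : Equiv.Perm (Fin N),
                Set.indicator ((fun z : Fin N → ℝ => z ∘ σ) ⁻¹' E) (fun _ => 1) z
              = ∑ σ : Equiv.Perm (Fin N), (if (z ∘ σ) ∈ E then (1:ℝ≥0∞) else 0) := by
                apply Finset.sum_congr rfl
                intro σ _
                simp [Set.indicator_apply, Set.mem_preimage]
            _ = ((Finset.univ.filter (fun σ : Equiv.Perm (Fin N) => (z ∘ σ) ∈ E)).card
                : ℝ≥0∞) := by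
                rw [Finset.card_filter]
                push_cast
                rfl
            _ ≤ (k : ℝ≥0∞) := by exact_mod_cast Nat.cast_le.mpr (hpoint z)
      _ = (k : ℝ≥0∞) := by simp
  have hkle : (k : ℝ≥0∞) ≤ ENNReal.ofReal α * (Nat.factorial N : ℝ≥0∞) := by
    have h1 : (k : ℝ) ≤ α * (Nat.factorial N : ℝ) := Nat.floor_le (by positivity)
    calc (k : ℝ≥0∞) = ENNReal.ofReal (k : ℝ) := by simp
      _ ≤ ENNReal.ofReal (α * (Nat.factorial N : ℝ)) := ENNReal.ofReal_le_ofReal h1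
      _ = ENNReal.ofReal α * ENNReal.ofReal (Nat.factorial N : ℝ) := ENNReal.ofReal_mul hα0
      _ = ENNReal.ofReal α * (Nat.factorial N : ℝ≥0∞) := by simp
  have hmain : (Nat.factorial N : ℝ≥0∞) * μ E ≤ (Nat.factorial N : ℝ≥0∞) * ENNReal.ofReal α := by
    rw [hsum]
    calc _ ≤ (k : ℝ≥0∞) := hbound
      _ ≤ ENNReal.ofReal α * (Nat.factorial N : ℝ≥0∞) := hkle
      _ = _ := mul_comm _ _
  have hfac_ne : (Nat.factorial N : ℝ≥0∞) ≠ 0 := by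
    simp [Nat.factorial_ne_zero]
  have hfac_top : (Nat.factorial N : ℝ≥0∞) ≠ ⊤ := ENNReal.natCast_ne_top _
  exact (ENNReal.mul_le_mul_iff_right hfac_ne hfac_top).mp hmain
end

section
/- Let m, n ≥ 1 and let x : Fin m → ℝ and y : Fin n → ℝ be two samples. For f : ℝ → ℝ set D(f) := (1/m)·∑_i f(x_i) − (1/n)·∑_j f(y_j). Then the infimum of D(f) over all monotone functions f : ℝ → ℝ with values in [0,1] equals the infimum of D(f) over all monotone functions f : ℝ → ℝ with values in {0,1} (monotone indicator functions). -/
open MeasureTheory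

lemma fsd_aux_indicator_eq (v : ℝ) :
    (fun c => if c ≤ v then (1:ℝ) else 0) = Set.indicator (Set.Iic v) (fun _ => 1) := by
  ext c; simp [Set.indicator_apply]

lemma fsd_aux_integrable (v : ℝ) :
    IntegrableOn (fun c => if c ≤ v then (1:ℝ) else 0) (Set.Ioc 0 1) := by
  rw [fsd_aux_indicator_eq]
  exact ((integrableOn_const_iff (C := (1:ℝ))).mpr (Or.inr (by simp [Real.volume_Ioc]))).indicator
    measurableSet_Iic

lemma fsd_aux_integral (v : ℝ) (hv0 : 0 ≤ v) (hv1 : v ≤ 1) :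
    ∫ c in Set.Ioc (0:ℝ) 1, (if c ≤ v then (1:ℝ) else 0) = v := by
  rw [fsd_aux_indicator_eq, setIntegral_indicator measurableSet_Iic]
  have h : Set.Ioc 0 1 ∩ Set.Iic v = Set.Ioc 0 v := by
    ext c
    simp only [Set.mem_inter_iff, Set.mem_Iic, Set.mem_Ioc]
    constructor
    · rintro ⟨⟨h1, h2⟩, h3⟩; exact ⟨h1, h3⟩
    · rintro ⟨h1, h2⟩; exact ⟨⟨h1, le_trans h2 hv1⟩, h2⟩
  rw [h]
  simp [Real.volume_Ioc, ENNReal.toReal_ofReal hv0, hv0]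

/-- The two-sample FSD test statistic takes the same value whether the infimum
runs over all isotone `[0,1]`-valued utility functions or over all isotone
indicator (`{0,1}`-valued) functions. -/
theorem fsd_statistic_indicator_reduction
    (m n : ℕ) (hm : 1 ≤ m) (hn : 1 ≤ n)
    (x : Fin m → ℝ) (y : Fin n → ℝ) :
    sInf {r : ℝ | ∃ f : ℝ → ℝ, Monotone f ∧ (∀ t, f t ∈ Set.Icc (0 : ℝ) 1) ∧
        r = (1 / m) * ∑ i, f (x i) - (1 / n) * ∑ j, f (y j)} =
      sInf {r : ℝ | ∃ f : ℝ → ℝ, Monotone f ∧ (∀ t, f t ∈ ({0, 1} : Set ℝ)) ∧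
        r = (1 / m) * ∑ i, f (x i) - (1 / n) * ∑ j, f (y j)} := by
  have hm' : (0:ℝ) < m := by exact_mod_cast hm
  have hn' : (0:ℝ) < n := by exact_mod_cast hn
  set A := {r : ℝ | ∃ f : ℝ → ℝ, Monotone f ∧ (∀ t, f t ∈ Set.Icc (0 : ℝ) 1) ∧
      r = (1 / m) * ∑ i, f (x i) - (1 / n) * ∑ j, f (y j)} with hA
  set B := {r : ℝ | ∃ f : ℝ → ℝ, Monotone f ∧ (∀ t, f t ∈ ({0, 1} : Set ℝ)) ∧
      r = (1 / m) * ∑ i, f (x i) - (1 / n) * ∑ j, f (y j)} with hB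
  have hBA : B ⊆ A := by
    rintro r ⟨f, hf, hf01, rfl⟩
    refine ⟨f, hf, fun t => ?_, rfl⟩
    have h := hf01 t
    simp only [Set.mem_insert_iff, Set.mem_singleton_iff] at h
    rcases h with h | h <;> simp [h, Set.mem_Icc]
  have h0A : (0:ℝ) ∈ A := ⟨fun _ => 0, monotone_const, fun t => by simp [Set.mem_Icc],
    by simp⟩
  have h0B : (0:ℝ) ∈ B := ⟨fun _ => 0, monotone_const, fun t => by simp, by simp⟩
  have hbdd : BddBelow A := by
    refine ⟨-1, fun r hr => ?_⟩
    obtain ⟨f, hf, hf01, rfl⟩ := hr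
    have h1 : (0:ℝ) ≤ ∑ i, f (x i) := Finset.sum_nonneg fun i _ => (hf01 _).1
    have h2 : ∑ j, f (y j) ≤ (n:ℝ) := by
      calc ∑ j, f (y j) ≤ ∑ _j : Fin n, (1:ℝ) := Finset.sum_le_sum fun j _ => (hf01 _).2
        _ = n := by simp
    have h3 : (1/(n:ℝ)) * ∑ j, f (y j) ≤ 1 := by
      rw [div_mul_eq_mul_div, one_mul, div_le_one hn']; exact h2
    have h4 : (0:ℝ) ≤ (1/(m:ℝ)) * ∑ i, f (x i) := by positivity
    linarith
  have hbddB : BddBelow B := hbdd.mono hBA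
  refine le_antisymm (csInf_le_csInf hbdd ⟨0, h0B⟩ hBA) (le_csInf ⟨0, h0A⟩ ?_)
  rintro r ⟨f, hf, hf01, rfl⟩
  -- indicator functions at each level c
  have hmemB : ∀ c : ℝ,
      ((1/(m:ℝ)) * ∑ i, (if c ≤ f (x i) then (1:ℝ) else 0)
        - (1/(n:ℝ)) * ∑ j, (if c ≤ f (y j) then (1:ℝ) else 0)) ∈ B := by
    intro c
    refine ⟨fun t => if c ≤ f t then 1 else 0, ?_, ?_, rfl⟩
    · intro a b hab
      dsimp only
      split_ifs with h1 h2 <;> try norm_num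
      exact absurd (h1.trans (hf hab)) h2
    · intro t
      by_cases h : c ≤ f t <;> simp [h]
  have hbound : ∀ c : ℝ, sInf B ≤
      (1/(m:ℝ)) * ∑ i, (if c ≤ f (x i) then (1:ℝ) else 0)
        - (1/(n:ℝ)) * ∑ j, (if c ≤ f (y j) then (1:ℝ) else 0) :=
    fun c => csInf_le hbddB (hmemB c)
  have hintx : IntegrableOn
      (fun c => ∑ i, (if c ≤ f (x i) then (1:ℝ) else 0)) (Set.Ioc 0 1) :=
    integrable_finset_sum _ fun i _ => fsd_aux_integrable (f (x i))
  have hinty : IntegrableOn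
      (fun c => ∑ j, (if c ≤ f (y j) then (1:ℝ) else 0)) (Set.Ioc 0 1) :=
    integrable_finset_sum _ fun j _ => fsd_aux_integrable (f (y j))
  have hintg : IntegrableOn
      (fun c => (1/(m:ℝ)) * ∑ i, (if c ≤ f (x i) then (1:ℝ) else 0)
        - (1/(n:ℝ)) * ∑ j, (if c ≤ f (y j) then (1:ℝ) else 0)) (Set.Ioc 0 1) :=
    (hintx.const_mul _).sub (hinty.const_mul _)
  have hkey : ∫ c in Set.Ioc (0:ℝ) 1,
      ((1/(m:ℝ)) * ∑ i, (if c ≤ f (x i) then (1:ℝ) else 0)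
        - (1/(n:ℝ)) * ∑ j, (if c ≤ f (y j) then (1:ℝ) else 0))
      = (1/(m:ℝ)) * ∑ i, f (x i) - (1/(n:ℝ)) * ∑ j, f (y j) := by
    rw [integral_sub (hintx.const_mul _) (hinty.const_mul _),
      integral_const_mul, integral_const_mul,
      integral_finset_sum _ (fun i _ => fsd_aux_integrable (f (x i))),
      integral_finset_sum _ (fun j _ => fsd_aux_integrable (f (y j))),
      Finset.sum_congr rfl (fun i _ => fsd_aux_integral (f (x i)) (hf01 _).1 (hf01 _).2),
      Finset.sum_congr rfl (fun j _ => fsd_aux_integral (f (y j)) (hf01 _).1 (hf01 _).2)]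
  have hconst : ∫ _c in Set.Ioc (0:ℝ) 1, sInf B = sInf B := by
    simp [Real.volume_Ioc]
  have hmono : ∫ _c in Set.Ioc (0:ℝ) 1, sInf B ≤ ∫ c in Set.Ioc (0:ℝ) 1,
      ((1/(m:ℝ)) * ∑ i, (if c ≤ f (x i) then (1:ℝ) else 0)
        - (1/(n:ℝ)) * ∑ j, (if c ≤ f (y j) then (1:ℝ) else 0)) := by
    apply integral_mono ((integrableOn_const_iff (C := sInf B)).mpr (Or.inr (by simp [Real.volume_Ioc]))) hintg
    intro c
    exact hbound c
  rw [← hkey, ← hconst]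
  exact hmono
end
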